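/- Let m, λ, a, b be real constants. Define f(u,v) = −1 + cos²(au) + cos²(bv), g(u,v) = 0, and r(u,v) = 2m − 4λ²uv + (1/32)(2 − cos(4au) − cos(4bv)) − (1/4)(a²u² + b²v²). Then ∂_u∂_v r = −4λ², ∂_u∂_u r = −(∂_u f)², and ∂_v∂_v r = −(∂_v f)² at every point (u,v) ∈ ℝ². -/

import Mathlib

open Real

/-- derivative of `y ↦ cos (c*y)` -/
lemma hasDerivAt_cos_mul (c y : ℝ) :
    HasDerivAt (fun y : ℝ => Real.cos (c * y)) (-Real.sin (c * y) * c) y := by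
  have h1 : HasDerivAt (fun y : ℝ => c * y) c y := by
    simpa using (hasDerivAt_id y).const_mul c
  exact (Real.hasDerivAt_cos (c * y)).comp y h1

/-- inner derivative (in the second slot of the r-shape function) -/
lemma inner_d (m lam a b x y : ℝ) :
    HasDerivAt (fun y : ℝ =>
      2 * m - 4 * lam ^ 2 * x * y
        + (1 / 32) * (2 - Real.cos (4 * a * x) - Real.cos (4 * b * y))
        - (1 / 4) * (a ^ 2 * x ^ 2 + b ^ 2 * y ^ 2))
      (-(4 * lam ^ 2 * x) + (1 / 8) * b * Real.sin (4 * b * y) - (1 / 2) * b ^ 2 * y)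
      y := by
  have h1 : HasDerivAt (fun y : ℝ => 4 * lam ^ 2 * x * y) (4 * lam ^ 2 * x) y := by
    simpa using (hasDerivAt_id y).const_mul (4 * lam ^ 2 * x)
  have h2 := hasDerivAt_cos_mul (4 * b) y
  have h3 : HasDerivAt (fun y : ℝ => b ^ 2 * y ^ 2) (b ^ 2 * (2 * y)) y := by
    simpa using (hasDerivAt_pow 2 y).const_mul (b ^ 2)
  have h4 : HasDerivAt (fun y : ℝ => 2 - Real.cos (4 * a * x) - Real.cos (4 * b * y))
      (0 - (-Real.sin (4 * b * y) * (4 * b))) y :=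
    ((hasDerivAt_const y ((2 : ℝ) - Real.cos (4 * a * x))).sub h2)
  have h := (((hasDerivAt_const y (2 * m)).sub h1).add (h4.const_mul (1 / 32))).sub
      ((((hasDerivAt_const y (a ^ 2 * x ^ 2)).add h3)).const_mul (1 / 4))
  refine h.congr_deriv ?_
  ring

lemma f_d (a b x v : ℝ) :
    HasDerivAt (fun x : ℝ => -1 + Real.cos (a * x) ^ 2 + Real.cos (b * v) ^ 2)
      (2 * Real.cos (a * x) * (-Real.sin (a * x) * a)) x := by
  have h := ((hasDerivAt_cos_mul a x).pow 2)
  have h2 := ((hasDerivAt_const x (-1 : ℝ)).add h).add (hasDerivAt_const x (Real.cos (b * v) ^ 2))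
  refine h2.congr_deriv ?_
  ring

theorem stmt_1 (m lam a b : ℝ)
    (f : ℝ → ℝ → ℝ)
    (hf : f = fun u v => -1 + Real.cos (a * u) ^ 2 + Real.cos (b * v) ^ 2)
    (g : ℝ → ℝ → ℝ) (hg : g = fun _ _ => (0 : ℝ))
    (r : ℝ → ℝ → ℝ)
    (hr : r = fun u v =>
      2 * m - 4 * lam ^ 2 * u * v
        + (1 / 32) * (2 - Real.cos (4 * a * u) - Real.cos (4 * b * v))
        - (1 / 4) * (a ^ 2 * u ^ 2 + b ^ 2 * v ^ 2)) :
    ∀ u v : ℝ,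
      deriv (fun x => deriv (fun y => r x y) v) u = -4 * lam ^ 2 ∧
      deriv (fun x => deriv (fun x' => r x' v) x) u
        = -(deriv (fun x => f x v) u) ^ 2 ∧
      deriv (fun y => deriv (fun y' => r u y') y) v
        = -(deriv (fun y => f u y) v) ^ 2 := by
  subst hf hg hr
  intro u v
  -- inner derivatives
  have dv : ∀ x y : ℝ, deriv (fun y => 2 * m - 4 * lam ^ 2 * x * y
        + (1 / 32) * (2 - Real.cos (4 * a * x) - Real.cos (4 * b * y))
        - (1 / 4) * (a ^ 2 * x ^ 2 + b ^ 2 * y ^ 2)) y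
      = -(4 * lam ^ 2 * x) + (1 / 8) * b * Real.sin (4 * b * y) - (1 / 2) * b ^ 2 * y :=
    fun x y => (inner_d m lam a b x y).deriv
  have du : ∀ x y : ℝ, deriv (fun x => 2 * m - 4 * lam ^ 2 * x * y
        + (1 / 32) * (2 - Real.cos (4 * a * x) - Real.cos (4 * b * y))
        - (1 / 4) * (a ^ 2 * x ^ 2 + b ^ 2 * y ^ 2)) x
      = -(4 * lam ^ 2 * y) + (1 / 8) * a * Real.sin (4 * a * x) - (1 / 2) * a ^ 2 * x := by
    intro x y
    have h := (inner_d m lam b a y x).deriv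
    rw [← h]
    congr 1
    funext z
    ring_nf
  refine ⟨?_, ?_, ?_⟩
  · -- mixed derivative
    simp only [dv]
    have h1 : HasDerivAt (fun x : ℝ => -(4 * lam ^ 2 * x)
        + (1 / 8) * b * Real.sin (4 * b * v) - (1 / 2) * b ^ 2 * v) (-(4 * lam ^ 2)) u := by
      have := ((hasDerivAt_id u).const_mul (4 * lam ^ 2)).neg
      simpa using (this.add_const ((1 / 8) * b * Real.sin (4 * b * v))).sub_const
        ((1 / 2) * b ^ 2 * v)
    rw [h1.deriv]; ring
  · -- uu derivative
    simp only [du]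
    have h1 : HasDerivAt (fun x : ℝ => -(4 * lam ^ 2 * v)
        + (1 / 8) * a * Real.sin (4 * a * x) - (1 / 2) * a ^ 2 * x)
        ((1 / 8) * a * (Real.cos (4 * a * u) * (4 * a)) - (1 / 2) * a ^ 2) u := by
      have hs : HasDerivAt (fun x : ℝ => Real.sin (4 * a * x)) (Real.cos (4 * a * u) * (4 * a)) u := by
        have hl : HasDerivAt (fun x : ℝ => 4 * a * x) (4 * a) u := by
          simpa using (hasDerivAt_id u).const_mul (4 * a)
        exact (Real.hasDerivAt_sin (4 * a * u)).comp u hl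
      have hx : HasDerivAt (fun x : ℝ => (1 / 2) * a ^ 2 * x) ((1 / 2) * a ^ 2) u := by
        simpa using (hasDerivAt_id u).const_mul ((1 / 2) * a ^ 2)
      have := ((hasDerivAt_const u (-(4 * lam ^ 2 * v))).add (hs.const_mul ((1 / 8) * a))).sub hx
      refine this.congr_deriv ?_; ring
    rw [h1.deriv, (f_d a b u v).deriv]
    have h2 : Real.cos (4 * a * u) = 2 * (2 * Real.cos (a * u) ^ 2 - 1) ^ 2 - 1 := by
      have e : (4 : ℝ) * a * u = 2 * (2 * (a * u)) := by ring
      rw [e, Real.cos_two_mul, Real.cos_two_mul]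
    have h3 := Real.sin_sq_add_cos_sq (a * u)
    rw [h2]; linear_combination (4 * a ^ 2 * Real.cos (a * u) ^ 2) * h3
  · -- vv derivative
    simp only [dv]
    have h1 : HasDerivAt (fun y : ℝ => -(4 * lam ^ 2 * u)
        + (1 / 8) * b * Real.sin (4 * b * y) - (1 / 2) * b ^ 2 * y)
        ((1 / 8) * b * (Real.cos (4 * b * v) * (4 * b)) - (1 / 2) * b ^ 2) v := by
      have hs : HasDerivAt (fun y : ℝ => Real.sin (4 * b * y)) (Real.cos (4 * b * v) * (4 * b)) v := by
        have hl : HasDerivAt (fun y : ℝ => 4 * b * y) (4 * b) v := by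
          simpa using (hasDerivAt_id v).const_mul (4 * b)
        exact (Real.hasDerivAt_sin (4 * b * v)).comp v hl
      have hx : HasDerivAt (fun y : ℝ => (1 / 2) * b ^ 2 * y) ((1 / 2) * b ^ 2) v := by
        simpa using (hasDerivAt_id v).const_mul ((1 / 2) * b ^ 2)
      have := ((hasDerivAt_const v (-(4 * lam ^ 2 * u))).add (hs.const_mul ((1 / 8) * b))).sub hx
      refine this.congr_deriv ?_; ring
    have hfv : HasDerivAt (fun y : ℝ => -1 + Real.cos (a * u) ^ 2 + Real.cos (b * y) ^ 2)
        (2 * Real.cos (b * v) * (-Real.sin (b * v) * b)) v := by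
      have h := ((hasDerivAt_cos_mul b v).pow 2)
      have h2 := ((hasDerivAt_const v ((-1 : ℝ) + Real.cos (a * u) ^ 2)).add h)
      refine h2.congr_deriv ?_
      ring
    rw [h1.deriv, hfv.deriv]
    have h2 : Real.cos (4 * b * v) = 2 * (2 * Real.cos (b * v) ^ 2 - 1) ^ 2 - 1 := by
      have e : (4 : ℝ) * b * v = 2 * (2 * (b * v)) := by ring
      rw [e, Real.cos_two_mul, Real.cos_two_mul]
    have h3 := Real.sin_sq_add_cos_sq (b * v)
    rw [h2]; linear_combination (4 * b ^ 2 * Real.cos (b * v) ^ 2) * h3
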